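/- Exactness at A₂ in the Mayer–Vietoris ladder sequence: Let B₁, C₁, A₂, B₂, B'₁, C'₁, A'₂ be abelian groups and let g₁ : B₁ → C₁, h₁ : C₁ → A₂, f₂ : A₂ → B₂, g'₁ : B'₁ → C'₁, h'₁ : C'₁ → A'₂, c₁ : C₁ → C'₁, a₂ : A₂ → A'₂ be group homomorphisms such that: the square commutes (h'₁ ∘ c₁ = a₂ ∘ h₁); the bottom row is exact at A₂ (im h₁ = ker f₂); the top row is exact at C'₁ (im g'₁ = ker h'₁); and c₁ is an isomorphism with inverse c₁^{−1}. Then the image of the composite homomorphism h₁ ∘ c₁^{−1} ∘ g'₁ : B'₁ → A₂ equals the kernel of the homomorphism A₂ → A'₂ ⊕ B₂, x ↦ (a₂(x), −f₂(x)). -/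
import Mathlib


/-- Exactness at `A₂` in the Mayer–Vietoris ladder sequence: the image of
`h₁ ∘ c₁⁻¹ ∘ g'₁` equals the kernel of `x ↦ (a₂ x, -f₂ x)`. -/
theorem mayer_vietoris_exact_at_A
    (B₁ C₁ A₂ B₂ B'₁ C'₁ A'₂ : Type*)
    [AddCommGroup B₁] [AddCommGroup C₁] [AddCommGroup A₂] [AddCommGroup B₂]
    [AddCommGroup B'₁] [AddCommGroup C'₁] [AddCommGroup A'₂]
    (g₁ : B₁ →+ C₁) (h₁ : C₁ →+ A₂) (f₂ : A₂ →+ B₂)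
    (g'₁ : B'₁ →+ C'₁) (h'₁ : C'₁ →+ A'₂)
    (c₁ : C₁ ≃+ C'₁) (a₂ : A₂ →+ A'₂)
    -- commuting square
    (hsq_h : ∀ x : C₁, h'₁ (c₁ x) = a₂ (h₁ x))
    -- exactness of the bottom row at A₂
    (hex_A : h₁.range = f₂.ker)
    -- exactness of the top row at C'₁
    (hex_C' : g'₁.range = h'₁.ker) :
    (h₁.comp (c₁.symm.toAddMonoidHom.comp g'₁)).range = (a₂.prod (-f₂)).ker := by
  ext x
  simp only [AddMonoidHom.mem_range, AddMonoidHom.mem_ker, AddMonoidHom.coe_comp,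
    Function.comp_apply, AddMonoidHom.prod_apply, AddMonoidHom.neg_apply, Prod.mk_eq_zero,
    neg_eq_zero]
  constructor
  · rintro ⟨b, rfl⟩
    constructor
    · simp only [AddEquiv.coe_toAddMonoidHom, ← hsq_h, c₁.apply_symm_apply]
      have : g'₁ b ∈ h'₁.ker := hex_C' ▸ ⟨b, rfl⟩
      exact this
    · have : h₁ (c₁.symm (g'₁ b)) ∈ f₂.ker := hex_A ▸ ⟨_, rfl⟩
      exact this
  · rintro ⟨ha, hf⟩
    have hx : x ∈ h₁.range := hex_A ▸ hf
    obtain ⟨y, rfl⟩ := hx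
    have : c₁ y ∈ g'₁.range := by
      rw [hex_C', AddMonoidHom.mem_ker, hsq_h, ha]
    obtain ⟨b, hb⟩ := this
    exact ⟨b, by simp [hb]⟩
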